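/- In the fixpoint loop of the simple sorting program, after iteration j of the scan, each element e has compared itself against the first j elements of the list; formally, with comp_0(e) = head and comp_{k+1}(e) = succ(comp_k(e)) (nil-absorbing), and newNext_k(e) = argmin { v m : v m > v e, m among the first k list elements } (nil if none), the invariant holds: newNext_n(e) = argmin { v m : v m > v e } over all n elements (nil iff v e is the maximum). Hence the fixpoint stabilizes after at most n + 1 iterations. -/

import Mathlib

/-- Loop invariant of the `Fix(compareElement)` phase: after scanning the first `k` list
elements, `newNext k e` is the argmin of the values greater than `v e` among them; hence
after `n` scans it is the global argmin (none iff `v e` is maximal) and the fixpoint is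
stable from iteration `n` on. -/
theorem sort_scan_invariant
    (n : ℕ) (v : Fin n → ℤ) (hv : Function.Injective v)
    (L : ℕ → Fin n)
    (hLsurj : ∀ i : Fin n, ∃ j, j < n ∧ L j = i)
    (hLinj : ∀ j j', j < n → j' < n → L j = L j' → j = j')
    (newNext : ℕ → Fin n → Option (Fin n))
    (hnn : ∀ k e m, newNext k e = some m ↔
      ((∃ j, j < k ∧ j < n ∧ L j = m) ∧ v e < v m ∧
        ∀ j, j < k → j < n → v e < v (L j) → v m ≤ v (L j))) :
    (∀ e m, newNext n e = some m ↔
      (v e < v m ∧ ∀ m', v e < v m' → v m ≤ v m')) ∧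
    (∀ e, newNext n e = none ↔ ∀ m, v m ≤ v e) ∧
    (∀ k e, n ≤ k → newNext k e = newNext n e) := by
  have key : ∀ e m, newNext n e = some m ↔
      (v e < v m ∧ ∀ m', v e < v m' → v m ≤ v m') := by
    intro e m
    rw [hnn]
    constructor
    · rintro ⟨_, h1, h2⟩
      refine ⟨h1, fun m' hm' => ?_⟩
      obtain ⟨j, hj, hLj⟩ := hLsurj m'
      exact hLj ▸ h2 j hj hj (hLj ▸ hm')
    · rintro ⟨h1, h2⟩
      obtain ⟨j, hj, hLj⟩ := hLsurj m
      exact ⟨⟨j, hj, hj, hLj⟩, h1, fun j' _ _ h => h2 _ h⟩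
  refine ⟨key, ?_, ?_⟩
  · intro e
    constructor
    · intro hnone m
      by_contra hlt
      push_neg at hlt
      -- the set of elements greater than v e is nonempty; take its min
      have hne : ({x : Fin n | v e < v x} : Set (Fin n)).toFinset.Nonempty := by
        rw [Set.toFinset_nonempty]
        exact ⟨m, hlt⟩
      obtain ⟨m0, hm0, hmin⟩ := Finset.exists_min_image _ v hne
      rw [Set.mem_toFinset] at hm0
      have : newNext n e = some m0 := by
        rw [key]
        exact ⟨hm0, fun m' hm' => hmin m' (Set.mem_toFinset.mpr hm')⟩
      rw [this] at hnone; exact Option.some_ne_none _ hnone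
    · intro hall
      cases h : newNext n e with
      | none => rfl
      | some m =>
        rw [key] at h
        exact absurd (hall m) (not_le.mpr h.1)
  · intro k e hk
    cases h : newNext n e with
    | some m =>
      rw [hnn] at h ⊢
      obtain ⟨⟨j, hj, hjn, hLj⟩, h1, h2⟩ := h
      exact ⟨⟨j, lt_of_lt_of_le hjn hk, hjn, hLj⟩, h1,
        fun j' _ hj'n h => h2 j' hj'n hj'n h⟩
    | none =>
      by_contra hne
      cases hke : newNext k e with
      | none => exact hne hke
      | some m =>
        rw [hnn] at hke
        obtain ⟨⟨j, _, hjn, hLj⟩, h1, h2⟩ := hke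
        have : newNext n e = some m := by
          rw [hnn]
          exact ⟨⟨j, hjn, hjn, hLj⟩, h1,
            fun j' hj' hj'n hlt => h2 j' (lt_of_lt_of_le hj' hk) hj'n hlt⟩
        rw [h] at this
        exact Option.some_ne_none _ this.symm
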